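/- Let P be an open subspace of ℝ^{n+1}, let τ : P → ℝ be projection onto the last coordinate. Suppose for each integer i there is a continuous section s_i : [i, i+1] → P of τ over [i, i+1], and for each integer i a continuous path γ_i : [0,1] → P_i (the fiber of τ over i) from s_{i−1}(i) to s_i(i). Then there exists a global continuous section s : ℝ → P of τ. -/

import Mathlib

theorem stmt12 (n : ℕ) (P : Set ((Fin n → ℝ) × ℝ)) (hP : IsOpen P)
    (s : ℤ → ℝ → (Fin n → ℝ) × ℝ)
    (hs_cont : ∀ i : ℤ, ContinuousOn (s i) (Set.Icc (i : ℝ) (i + 1)))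
    (hs_mem : ∀ i : ℤ, ∀ x ∈ Set.Icc (i : ℝ) (i + 1), s i x ∈ P)
    (hs_sec : ∀ i : ℤ, ∀ x ∈ Set.Icc (i : ℝ) (i + 1), (s i x).2 = x)
    (γ : ℤ → ℝ → (Fin n → ℝ) × ℝ)
    (hγ_cont : ∀ i : ℤ, ContinuousOn (γ i) (Set.Icc (0 : ℝ) 1))
    (hγ_mem : ∀ i : ℤ, ∀ t ∈ Set.Icc (0 : ℝ) 1, γ i t ∈ P)
    (hγ_fib : ∀ i : ℤ, ∀ t ∈ Set.Icc (0 : ℝ) 1, (γ i t).2 = (i : ℝ))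
    (hγ_src : ∀ i : ℤ, γ i 0 = s (i - 1) (i : ℝ))
    (hγ_tgt : ∀ i : ℤ, γ i 1 = s i (i : ℝ)) :
    ∃ S : ℝ → (Fin n → ℝ) × ℝ,
      Continuous S ∧ (∀ x : ℝ, S x ∈ P) ∧ ∀ x : ℝ, (S x).2 = x := by
  classical
  -- Step 1: thickening of the compact image sets inside P
  have hK : ∀ i : ℤ, ∃ δ > (0:ℝ), ∀ p ∈ (γ i '' Set.Icc (0:ℝ) 1 ∪ s i '' Set.Icc (i:ℝ) (i+1)),
      ∀ x : ℝ, |x - p.2| < δ → (p.1, x) ∈ P := by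
    intro i
    have hcomp : IsCompact (γ i '' Set.Icc (0:ℝ) 1 ∪ s i '' Set.Icc (i:ℝ) (i+1)) :=
      (isCompact_Icc.image_of_continuousOn (hγ_cont i)).union
        (isCompact_Icc.image_of_continuousOn (hs_cont i))
    have hsub : (γ i '' Set.Icc (0:ℝ) 1 ∪ s i '' Set.Icc (i:ℝ) (i+1)) ⊆ P := by
      apply Set.union_subset
      · rintro _ ⟨t, ht, rfl⟩; exact hγ_mem i t ht
      · rintro _ ⟨y, hy, rfl⟩; exact hs_mem i y hy
    obtain ⟨δ, hδpos, hth⟩ := hcomp.exists_thickening_subset_open hP hsub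
    refine ⟨δ, hδpos, fun p hp x hx => hth ?_⟩
    rw [Metric.mem_thickening_iff]
    refine ⟨p, hp, ?_⟩
    have : dist ((p.1, x) : (Fin n → ℝ) × ℝ) p = |x - p.2| := by
      simp [Prod.dist_eq, Real.dist_eq]
    rw [this]; exact hx
  choose δ hδpos hδ using hK
  set ε : ℤ → ℝ := fun i => min (δ i / 2) (1/2) with hεdef
  have hεpos : ∀ i, 0 < ε i := fun i => lt_min (by linarith [hδpos i]) (by norm_num)
  have hεhalf : ∀ i, ε i ≤ 1/2 := fun i => min_le_right _ _
  have hεδ : ∀ i, ε i < δ i := fun i => lt_of_le_of_lt (min_le_left _ _) (by linarith [hδpos i])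
  -- reparametrizations
  set T : ℤ → ℝ → ℝ := fun i x => max 0 (min 1 ((x - i)/ε i)) with hTdef
  set Y : ℤ → ℝ → ℝ := fun i x => max (i:ℝ) (min ((i:ℝ)+1) (i + (x - i - ε i)/(1 - ε i))) with hYdef
  set F : ℤ → ℝ → (Fin n → ℝ) × ℝ :=
    fun i x => if x ≤ i + ε i then ((γ i (T i x)).1, x) else ((s i (Y i x)).1, x) with hFdef
  have hT : ∀ i x, T i x ∈ Set.Icc (0:ℝ) 1 :=
    fun i x => ⟨le_max_left _ _, max_le zero_le_one (min_le_left _ _)⟩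
  have hY : ∀ (i : ℤ) (x : ℝ), Y i x ∈ Set.Icc (i:ℝ) ((i:ℝ)+1) := by
    intro i x
    refine ⟨le_max_left _ _, max_le (by linarith) (min_le_left _ _)⟩
  have hTcont : ∀ i, Continuous (T i) := by
    intro i; apply Continuous.max continuous_const
    exact Continuous.min continuous_const (by fun_prop)
  have hYcont : ∀ i, Continuous (Y i) := by
    intro i; apply Continuous.max continuous_const
    exact Continuous.min continuous_const (by fun_prop)
  have hγT : ∀ i, Continuous (fun x => γ i (T i x)) :=
    fun i => (hγ_cont i).comp_continuous (hTcont i) (fun x => hT i x)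
  have hsY : ∀ i, Continuous (fun x => s i (Y i x)) :=
    fun i => (hs_cont i).comp_continuous (hYcont i) (fun x => hY i x)
  have hFcont : ∀ i, Continuous (F i) := by
    intro i
    rw [hFdef]
    apply Continuous.if_le
    · exact ((hγT i).fst).prodMk continuous_id
    · exact ((hsY i).fst).prodMk continuous_id
    · exact continuous_id
    · exact continuous_const
    · intro x hx
      have hne : ε i ≠ 0 := (hεpos i).ne'
      have hTx : T i x = 1 := by
        rw [hTdef]; simp only
        rw [show x - (i:ℝ) = ε i by linarith]
        rw [div_self hne]
        simp
      have hYx : Y i x = (i:ℝ) := by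
        rw [hYdef]; simp only
        rw [show x - (i:ℝ) - ε i = 0 by linarith]
        simp
      rw [hTx, hYx, hγ_tgt i]
  have hFsnd : ∀ i x, (F i x).2 = x := by
    intro i x
    by_cases h : x ≤ (i:ℝ) + ε i <;> simp [hFdef, h]
  have hFmem : ∀ i : ℤ, ∀ x ∈ Set.Icc (i:ℝ) (i+1), F i x ∈ P := by
    intro i x hx
    by_cases h : x ≤ (i:ℝ) + ε i
    · have hmemK : γ i (T i x) ∈ (γ i '' Set.Icc (0:ℝ) 1 ∪ s i '' Set.Icc (i:ℝ) (i+1)) :=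
        Set.mem_union_left _ ⟨T i x, hT i x, rfl⟩
      have habs : |x - (γ i (T i x)).2| < δ i := by
        rw [hγ_fib i _ (hT i x)]
        rw [abs_of_nonneg (by linarith [hx.1])]
        have := hεδ i
        linarith
      have := hδ i _ hmemK x habs
      simpa [hFdef, h] using this
    · push_neg at h
      have h1ε : 0 < 1 - ε i := by linarith [hεhalf i]
      set w : ℝ := (i:ℝ) + (x - i - ε i)/(1 - ε i) with hwdef
      have hnum : 0 ≤ x - (i:ℝ) - ε i := by linarith
      have hwl : (i:ℝ) ≤ w := by
        rw [hwdef]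
        have : 0 ≤ (x - (i:ℝ) - ε i)/(1 - ε i) := div_nonneg hnum h1ε.le
        linarith
      have hwu : w ≤ (i:ℝ) + 1 := by
        rw [hwdef]
        have : (x - (i:ℝ) - ε i)/(1 - ε i) ≤ 1 := by
          rw [div_le_one h1ε]; linarith [hx.2]
        linarith
      have hYw : Y i x = w := by
        rw [hYdef]; simp only
        rw [min_eq_right hwu, max_eq_right hwl]
      have hmemK : s i (Y i x) ∈ (γ i '' Set.Icc (0:ℝ) 1 ∪ s i '' Set.Icc (i:ℝ) (i+1)) :=
        Set.mem_union_right _ ⟨Y i x, hY i x, rfl⟩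
      have hxw0 : 0 ≤ x - w := by
        rw [hwdef]
        have : (x - (i:ℝ) - ε i)/(1 - ε i) ≤ x - i := by
          rw [div_le_iff₀ h1ε]
          nlinarith [hx.2, (hεpos i).le]
        linarith
      have hxwε : x - w ≤ ε i := by
        rw [hwdef]
        have h2 : (x - (i:ℝ) - ε i) * (1 - ε i) ≤ x - (i:ℝ) - ε i :=
          mul_le_of_le_one_right hnum (by linarith [hεpos i])
        have : x - (i:ℝ) - ε i ≤ (x - (i:ℝ) - ε i)/(1 - ε i) := by
          rw [le_div_iff₀ h1ε]
          linarith
        linarith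
      have habs : |x - (s i (Y i x)).2| < δ i := by
        rw [hs_sec i _ (hY i x), hYw, abs_of_nonneg hxw0]
        linarith [hεδ i]
      have := hδ i _ hmemK x habs
      simpa [hFdef, not_le.2 h] using this
  -- matching at integers
  have hFmatch : ∀ i : ℤ, F i (i:ℝ) = F (i-1) (i:ℝ) := by
    intro i
    have hle : (i:ℝ) ≤ (i:ℝ) + ε i := by linarith [hεpos i]
    have hT0 : T i (i:ℝ) = 0 := by
      rw [hTdef]; simp only
      rw [sub_self, zero_div]
      simp
    have lhs : F i (i:ℝ) = ((s (i-1) (i:ℝ)).1, (i:ℝ)) := by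
      rw [hFdef]; simp only [if_pos hle, hT0, hγ_src i]
    have hnle : ¬ ((i:ℝ) ≤ ((i-1:ℤ):ℝ) + ε (i-1)) := by
      push_cast
      have := hεhalf (i-1)
      push_neg
      linarith
    have hYv : Y (i-1) (i:ℝ) = (i:ℝ) := by
      rw [hYdef]; simp only
      push_cast
      rw [show (i:ℝ) - ((i:ℝ) - 1) - ε (i-1) = 1 - ε (i-1) by ring]
      rw [div_self (by linarith [hεhalf (i-1)] : (1:ℝ) - ε (i-1) ≠ 0)]
      rw [show (i:ℝ) - 1 + 1 = (i:ℝ) by ring]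
      rw [min_self, max_eq_right (by linarith)]
    have rhs : F (i-1) (i:ℝ) = ((s (i-1) (i:ℝ)).1, (i:ℝ)) := by
      rw [hFdef]; simp only [if_neg hnle]
      rw [hYv]
    rw [lhs, rhs]
  -- glue
  refine ⟨fun x => F ⌊x⌋ x, ?_, ?_, ?_⟩
  · rw [continuous_iff_continuousAt]
    intro x
    have hfloor : ∀ (i : ℤ) (z : ℝ), z ∈ Set.Ico (i:ℝ) ((i:ℝ)+1) → ⌊z⌋ = i := by
      intro i z hz
      rw [Int.floor_eq_iff]
      exact ⟨hz.1, hz.2⟩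
    by_cases hx : x = ((⌊x⌋ : ℤ) : ℝ)
    · set i := ⌊x⌋ with hi
      have hright : ContinuousWithinAt (fun x => F ⌊x⌋ x) (Set.Ici x) x := by
        apply (hFcont i).continuousAt.continuousWithinAt.congr_of_eventuallyEq
        · filter_upwards [Ico_mem_nhdsGE_of_mem
            (by constructor <;> [exact le_refl x; linarith] : x ∈ Set.Ico x (x+1))] with z hz
          have : ⌊z⌋ = i := by
            apply hfloor
            rw [hx] at hz
            exact ⟨hz.1, hz.2⟩
          rw [this]
        · rfl
      have hleft : ContinuousWithinAt (fun x => F ⌊x⌋ x) (Set.Iic x) x := by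
        apply (hFcont (i-1)).continuousAt.continuousWithinAt.congr_of_eventuallyEq
        · filter_upwards [Ioc_mem_nhdsLE_of_mem
            (by constructor <;> linarith : x ∈ Set.Ioc (x-1) x)] with z hz
          rcases eq_or_lt_of_le hz.2 with heq | hlt
          · rw [heq, ← hi, hx, hFmatch i]
          · have : ⌊z⌋ = i - 1 := by
              apply hfloor
              rw [hx] at hz hlt
              push_cast
              constructor
              · linarith [hz.1]
              · linarith
            rw [this]
        · rw [← hi, hx, hFmatch i]
      have := hleft.union hright
      rwa [Set.Iic_union_Ici, continuousWithinAt_univ] at this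
    · have hmem : x ∈ Set.Ioo ((⌊x⌋:ℤ):ℝ) (((⌊x⌋:ℤ):ℝ)+1) :=
        ⟨lt_of_le_of_ne (Int.floor_le x) (Ne.symm hx), Int.lt_floor_add_one x⟩
      apply (hFcont ⌊x⌋).continuousAt.congr
      filter_upwards [Ioo_mem_nhds hmem.1 hmem.2] with z hz
      rw [hfloor ⌊x⌋ z ⟨hz.1.le, hz.2⟩]
  · intro x
    exact hFmem ⌊x⌋ x ⟨Int.floor_le x, (Int.lt_floor_add_one x).le⟩
  · intro x
    exact hFsnd ⌊x⌋ x
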